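/- arXiv:1509.01900 — 4 statements merged into one kernel-verified Lean document; each statement's English description precedes it below -/
import Mathlib

section
/- If κ_i = 1 for all i and α > 0, then there exist constants c, C > 0 such that for all n ≥ 1, c · n^{-2α/(1+2α)} ≤ ∑_{i≥1} 1/(i^{1+2α} + n) ≤ C · n^{-2α/(1+2α)}. -/
/-- Tangent-line inequality for `x ↦ x^{-γ}`. -/
lemma pv_key {γ a : ℝ} (hγ : 0 < γ) (ha : 0 < a) :
    γ * (a + 1) ^ (-(γ + 1)) ≤ a ^ (-γ) - (a + 1) ^ (-γ) := by
  have hb : (0:ℝ) < a + 1 := by linarith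
  have hr : (0:ℝ) < a / (a + 1) := by positivity
  have hlog : 1 / (a + 1) ≤ -Real.log (a / (a + 1)) := by
    have h1 := Real.log_le_sub_one_of_pos hr
    have h2 : a / (a + 1) - 1 = -(1 / (a + 1)) := by field_simp; ring
    linarith [h2 ▸ h1]
  have h4 : 1 / (a + 1) * γ + 1 ≤ (a / (a + 1)) ^ (-γ) := by
    rw [Real.rpow_def_of_pos hr]
    calc 1 / (a + 1) * γ + 1 ≤ Real.exp (1 / (a + 1) * γ) := Real.add_one_le_exp _
      _ ≤ Real.exp (Real.log (a / (a + 1)) * (-γ)) := by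
          apply Real.exp_le_exp.2
          have h : Real.log (a / (a + 1)) * (-γ) = (-Real.log (a / (a + 1))) * γ := by ring
          rw [h]
          exact mul_le_mul_of_nonneg_right hlog hγ.le
  have h5 : a ^ (-γ) = (a / (a + 1)) ^ (-γ) * (a + 1) ^ (-γ) := by
    rw [← Real.mul_rpow hr.le hb.le, div_mul_cancel₀ _ (ne_of_gt hb)]
  have h6 : (a + 1) ^ (-(γ + 1)) = (a + 1) ^ (-γ) * (a + 1)⁻¹ := by
    rw [show -(γ + 1) = -γ + (-1) by ring, Real.rpow_add hb, Real.rpow_neg_one]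
  have hpos : (0:ℝ) < (a + 1) ^ (-γ) := Real.rpow_pos_of_pos hb _
  have h7 := mul_le_mul_of_nonneg_right h4 hpos.le
  rw [h5, h6, one_div] at *
  nlinarith [hpos, hb]

lemma pv_tail_summable {γ : ℝ} (hγ : 0 < γ) (K : ℕ) :
    Summable (fun i : ℕ => ((i : ℝ) + K + 1) ^ (-(γ + 1))) := by
  have h := (summable_nat_add_iff (K + 1)).2
    (Real.summable_nat_rpow.2 (show -(γ + 1) < -1 by linarith))
  refine h.congr fun i => ?_
  congr 1
  push_cast
  ring

lemma pv_tail {γ : ℝ} (hγ : 0 < γ) {K : ℕ} (hK : 1 ≤ K) :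
    ∑' i : ℕ, ((i : ℝ) + K + 1) ^ (-(γ + 1)) ≤ (K : ℝ) ^ (-γ) / γ := by
  apply Summable.tsum_le_of_sum_le (pv_tail_summable hγ K)
  intro s
  obtain ⟨M, hM⟩ := s.exists_nat_subset_range
  have hstep : ∑ i ∈ s, ((i : ℝ) + K + 1) ^ (-(γ + 1))
      ≤ ∑ i ∈ Finset.range M, ((i : ℝ) + K + 1) ^ (-(γ + 1)) :=
    Finset.sum_le_sum_of_subset_of_nonneg hM
      (fun i _ _ => Real.rpow_nonneg (by positivity) _)
  refine hstep.trans ?_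
  rw [le_div_iff₀ hγ]
  have hKpos : (0:ℝ) < (K : ℝ) := by exact_mod_cast hK
  calc (∑ i ∈ Finset.range M, ((i : ℝ) + K + 1) ^ (-(γ + 1))) * γ
      = ∑ i ∈ Finset.range M, γ * ((i : ℝ) + K + 1) ^ (-(γ + 1)) := by
        rw [Finset.sum_mul]; exact Finset.sum_congr rfl fun i _ => by ring
    _ ≤ ∑ i ∈ Finset.range M, (((i : ℝ) + K) ^ (-γ) - ((i : ℝ) + K + 1) ^ (-γ)) :=
        Finset.sum_le_sum fun i _ => pv_key hγ (by positivity)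
    _ = ∑ i ∈ Finset.range M,
          ((((i : ℕ) : ℝ) + K) ^ (-γ) - (((i + 1 : ℕ) : ℝ) + K) ^ (-γ)) := by
        refine Finset.sum_congr rfl fun i _ => ?_
        congr 2
        push_cast; ring
    _ = (((0 : ℕ) : ℝ) + K) ^ (-γ) - (((M : ℕ) : ℝ) + K) ^ (-γ) :=
        Finset.sum_range_sub' (fun i => (((i : ℕ) : ℝ) + K) ^ (-γ)) M
    _ ≤ (K : ℝ) ^ (-γ) := by
        have h0 : (((0 : ℕ) : ℝ) + K) = (K : ℝ) := by push_cast; ring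
        rw [h0]
        have := Real.rpow_nonneg (show (0:ℝ) ≤ ((M : ℕ) : ℝ) + K by positivity) (-γ)
        linarith

lemma pv_summable {β : ℝ} (hβ : 1 < β) {n : ℝ} (hn : 0 ≤ n) :
    Summable (fun i : ℕ => 1 / (((i : ℝ) + 1) ^ β + n)) := by
  have h1 : Summable (fun i : ℕ => ((i : ℝ) + 1) ^ (-β)) := by
    have h := (summable_nat_add_iff 1).2 (Real.summable_nat_rpow.2 (show -β < -1 by linarith))
    refine h.congr fun i => ?_
    congr 1
    push_cast; ring
  refine Summable.of_nonneg_of_le (fun i => by positivity) (fun i => ?_) h1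
  have hp : (0:ℝ) < ((i : ℝ) + 1) ^ β := Real.rpow_pos_of_pos (by positivity) _
  rw [Real.rpow_neg (by positivity), ← one_div]
  exact one_div_le_one_div_of_le hp (le_add_of_nonneg_right hn)

set_option maxHeartbeats 1000000 in
/-- For κ_i = 1 and α > 0, the total posterior variance ∑_{i≥1} 1/(i^{1+2α}+n) is of exact
order n^{-2α/(1+2α)}. -/
theorem posterior_variance_order (α : ℝ) (hα : 0 < α) :
    ∃ c C : ℝ, 0 < c ∧ 0 < C ∧ ∀ n : ℕ, 1 ≤ n →
      c * (n : ℝ) ^ (-(2 * α) / (1 + 2 * α)) ≤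
          (∑' i : ℕ, 1 / (((i : ℝ) + 1) ^ (1 + 2 * α) + n)) ∧
        (∑' i : ℕ, 1 / (((i : ℝ) + 1) ^ (1 + 2 * α) + n)) ≤
          C * (n : ℝ) ^ (-(2 * α) / (1 + 2 * α)) := by
  have hβ : (1:ℝ) < 1 + 2 * α := by linarith
  have hβ0 : (0:ℝ) < 1 + 2 * α := by linarith
  refine ⟨4⁻¹, 2 + (2 * α)⁻¹, by norm_num, by positivity, fun n hn => ?_⟩
  have hn1 : (1:ℝ) ≤ (n : ℝ) := by exact_mod_cast hn
  have hn0 : (0:ℝ) < (n : ℝ) := by linarith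
  set x : ℝ := (n : ℝ) ^ ((1 + 2 * α)⁻¹) with hxdef
  have hx1 : (1:ℝ) ≤ x := Real.one_le_rpow hn1 (by positivity)
  have hx0 : (0:ℝ) < x := by linarith
  have hxβ : x ^ (1 + 2 * α) = (n : ℝ) := by
    rw [hxdef, ← Real.rpow_mul hn0.le, inv_mul_cancel₀ (ne_of_gt hβ0), Real.rpow_one]
  have ht : (n : ℝ) ^ (-(2 * α) / (1 + 2 * α)) = x / n := by
    have he : -(2 * α) / (1 + 2 * α) = (1 + 2 * α)⁻¹ - 1 := by field_simp; ring
    rw [he, Real.rpow_sub hn0, Real.rpow_one]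
  have ht2 : x ^ (-(2 * α)) = (n : ℝ) ^ (-(2 * α) / (1 + 2 * α)) := by
    rw [hxdef, ← Real.rpow_mul hn0.le]
    congr 1
    field_simp
  have hs : Summable (fun i : ℕ => 1 / (((i : ℝ) + 1) ^ (1 + 2 * α) + (n : ℝ))) :=
    pv_summable hβ hn0.le
  constructor
  · -- lower bound
    set K : ℕ := ⌊x⌋₊ with hKdef
    have hKx : (K : ℝ) ≤ x := Nat.floor_le hx0.le
    have hK1 : 1 ≤ K := Nat.le_floor (by exact_mod_cast hx1)
    have hK1' : (1:ℝ) ≤ (K : ℝ) := by exact_mod_cast hK1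
    have h2K : x ≤ 2 * K := by
      have := Nat.sub_one_lt_floor x
      linarith
    calc 4⁻¹ * (n : ℝ) ^ (-(2 * α) / (1 + 2 * α)) = x / (4 * n) := by rw [ht]; ring
      _ ≤ (2 * K) / (4 * n) := by gcongr
      _ = ∑ i ∈ Finset.range K, 1 / (2 * (n : ℝ)) := by
          rw [Finset.sum_const, Finset.card_range, nsmul_eq_mul]
          field_simp
          ring
      _ ≤ ∑ i ∈ Finset.range K, 1 / (((i : ℝ) + 1) ^ (1 + 2 * α) + n) := by
          refine Finset.sum_le_sum fun i hi => ?_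
          have hiK : ((i : ℝ) + 1) ≤ (K : ℝ) := by
            have : i + 1 ≤ K := Finset.mem_range.1 hi
            exact_mod_cast this
          have h1 : ((i : ℝ) + 1) ^ (1 + 2 * α) ≤ (K : ℝ) ^ (1 + 2 * α) :=
            Real.rpow_le_rpow (by positivity) hiK hβ0.le
          have h2 : (K : ℝ) ^ (1 + 2 * α) ≤ x ^ (1 + 2 * α) :=
            Real.rpow_le_rpow (by positivity) hKx hβ0.le
          have h3 : ((i : ℝ) + 1) ^ (1 + 2 * α) ≤ (n : ℝ) := by
            rw [← hxβ]; linarith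
          apply one_div_le_one_div_of_le (by positivity)
          linarith
      _ ≤ ∑' i : ℕ, 1 / (((i : ℝ) + 1) ^ (1 + 2 * α) + n) :=
          Summable.sum_le_tsum _ (fun i _ => by positivity) hs
  · -- upper bound
    set K : ℕ := ⌈x⌉₊ with hKdef
    have hxK : x ≤ (K : ℝ) := Nat.le_ceil x
    have hK1 : 1 ≤ K := Nat.one_le_ceil_iff.2 hx0
    have hK2 : (K : ℝ) ≤ 2 * x := by
      have := Nat.ceil_lt_add_one hx0.le
      linarith
    rw [← Summable.sum_add_tsum_nat_add K hs]
    have hpart1 : ∑ i ∈ Finset.range K, 1 / (((i : ℝ) + 1) ^ (1 + 2 * α) + n)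
        ≤ 2 * ((n : ℝ) ^ (-(2 * α) / (1 + 2 * α))) := by
      calc ∑ i ∈ Finset.range K, 1 / (((i : ℝ) + 1) ^ (1 + 2 * α) + n)
          ≤ ∑ i ∈ Finset.range K, 1 / (n : ℝ) := by
            refine Finset.sum_le_sum fun i _ => ?_
            apply one_div_le_one_div_of_le hn0
            have : (0:ℝ) < ((i : ℝ) + 1) ^ (1 + 2 * α) := Real.rpow_pos_of_pos (by positivity) _
            linarith
        _ = (K : ℝ) / n := by
            rw [Finset.sum_const, Finset.card_range, nsmul_eq_mul]; ring
        _ ≤ (2 * x) / n := by gcongr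
        _ = 2 * ((n : ℝ) ^ (-(2 * α) / (1 + 2 * α))) := by rw [ht]; ring
    have hpart2 : ∑' i : ℕ, 1 / (((((i + K : ℕ)) : ℝ) + 1) ^ (1 + 2 * α) + n)
        ≤ (2 * α)⁻¹ * ((n : ℝ) ^ (-(2 * α) / (1 + 2 * α))) := by
      have hγ : (0:ℝ) < 2 * α := by linarith
      have hle : ∀ i : ℕ, 1 / (((((i + K : ℕ)) : ℝ) + 1) ^ (1 + 2 * α) + n)
          ≤ ((i : ℝ) + K + 1) ^ (-(2 * α + 1)) := by
        intro i
        have hb : ((((i + K : ℕ)) : ℝ) + 1) = ((i : ℝ) + K + 1) := by push_cast; ring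
        have hbpos : (0:ℝ) < (i : ℝ) + K + 1 := by positivity
        rw [hb, show (1 + 2 * α) = (2 * α + 1) by ring,
          Real.rpow_neg hbpos.le, ← one_div]
        apply one_div_le_one_div_of_le (Real.rpow_pos_of_pos hbpos _)
        linarith
      calc ∑' i : ℕ, 1 / (((((i + K : ℕ)) : ℝ) + 1) ^ (1 + 2 * α) + n)
          ≤ ∑' i : ℕ, ((i : ℝ) + K + 1) ^ (-(2 * α + 1)) :=
            Summable.tsum_le_tsum hle ((summable_nat_add_iff K).2 hs) (pv_tail_summable hγ K)
        _ ≤ (K : ℝ) ^ (-(2 * α)) / (2 * α) := pv_tail hγ hK1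
        _ ≤ x ^ (-(2 * α)) / (2 * α) := by
            exact div_le_div_of_nonneg_right
              (Real.rpow_le_rpow_of_nonpos hx0 hxK (by linarith)) hγ.le
        _ = (2 * α)⁻¹ * ((n : ℝ) ^ (-(2 * α) / (1 + 2 * α))) := by
            rw [ht2]; ring
    have := add_le_add hpart1 hpart2
    calc _ ≤ _ := this
      _ = (2 + (2 * α)⁻¹) * (n : ℝ) ^ (-(2 * α) / (1 + 2 * α)) := by ring
end

section
/- If θ₀ is a self-similar sequence satisfying c₁ N^{-2β} ≤ ∑_{i=N}^{2N} θ_{0,i}² ≤ c₂ N^{-2β} for all N ≥ N₀ (with 0 < c₁ ≤ c₂, β > 0), then θ₀ satisfies the polished tail condition with ρ = 2 and some constant c > 0 depending only on c₁, c₂, β. -/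
/-- A self-similar sequence (block sums of order N^{-2β}) satisfies the polished tail condition
with ρ = 2: there is c > 0, depending only on c₁, c₂, β, such that for all N ≥ N₀ the block sum
∑_{N ≤ i < 2N} θ_i² is at least c times the tail sum ∑_{i ≥ N} θ_i². -/
theorem self_similar_polished_tail
    (θ : ℕ → ℝ) (β c₁ c₂ : ℝ) (hβ : 0 < β) (hc₁ : 0 < c₁) (hc₁₂ : c₁ ≤ c₂)
    (N₀ : ℕ) (hN₀ : 1 ≤ N₀)
    (hss : ∀ N, N₀ ≤ N →
      c₁ * (N : ℝ) ^ (-(2 * β)) ≤ (∑ i ∈ Finset.Ico N (2 * N), θ i ^ 2) ∧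
        (∑ i ∈ Finset.Ico N (2 * N), θ i ^ 2) ≤ c₂ * (N : ℝ) ^ (-(2 * β))) :
    ∃ c : ℝ, 0 < c ∧ ∀ N, N₀ ≤ N →
      c * (∑' i : ℕ, θ (N + i) ^ 2) ≤ ∑ i ∈ Finset.Ico N (2 * N), θ i ^ 2 := by
  set r : ℝ := (2 : ℝ) ^ (-(2 * β)) with hr_def
  have hr0 : 0 < r := Real.rpow_pos_of_pos (by norm_num) _
  have hr1 : r < 1 :=
    Real.rpow_lt_one_of_one_lt_of_neg (by norm_num) (by nlinarith)
  have h1r : 0 < 1 - r := by linarith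
  have hc₂ : 0 < c₂ := lt_of_lt_of_le hc₁ hc₁₂
  refine ⟨c₁ * (1 - r) / c₂, by positivity, fun N hN => ?_⟩
  have hN1 : 1 ≤ N := le_trans hN₀ hN
  have hNpos : (0 : ℝ) < (N : ℝ) := by exact_mod_cast hN1
  have hNpow : (0 : ℝ) < (N : ℝ) ^ (-(2 * β)) := Real.rpow_pos_of_pos hNpos _
  have hblock : c₁ * (N : ℝ) ^ (-(2 * β)) ≤ ∑ i ∈ Finset.Ico N (2 * N), θ i ^ 2 :=
    (hss N hN).1
  -- key: sums over Ico N (2^m * N) are bounded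
  have key : ∀ m : ℕ, (∑ j ∈ Finset.Ico N (2 ^ m * N), θ j ^ 2) ≤
      c₂ * (N : ℝ) ^ (-(2 * β)) * ∑ k ∈ Finset.range m, r ^ k := by
    intro m
    induction m with
    | zero => simp
    | succ m ih =>
      have h1 : N ≤ 2 ^ m * N := Nat.le_mul_of_pos_left N (Nat.pow_pos (by norm_num))
      have h2 : 2 ^ m * N ≤ 2 ^ (m + 1) * N := by
        have : (2:ℕ) ^ m ≤ 2 ^ (m+1) := Nat.pow_le_pow_right (by norm_num) (by omega)
        exact Nat.mul_le_mul_right N this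
      rw [← Finset.sum_Ico_consecutive _ h1 h2, Finset.sum_range_succ]
      have hblk : (∑ j ∈ Finset.Ico (2 ^ m * N) (2 ^ (m + 1) * N), θ j ^ 2) ≤
          c₂ * (N : ℝ) ^ (-(2 * β)) * r ^ m := by
        have hN' : N₀ ≤ 2 ^ m * N := le_trans hN h1
        have := (hss (2 ^ m * N) hN').2
        have heq : 2 * (2 ^ m * N) = 2 ^ (m + 1) * N := by ring
        rw [heq] at this
        refine le_trans this (le_of_eq ?_)
        have hcast : ((2 ^ m * N : ℕ) : ℝ) = (2:ℝ) ^ m * (N : ℝ) := by push_cast; ring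
        rw [hcast, Real.mul_rpow (by positivity) (le_of_lt hNpos)]
        have h2m : ((2:ℝ) ^ m) ^ (-(2 * β)) = r ^ m := by
          rw [← Real.rpow_natCast 2 m, ← Real.rpow_mul (by norm_num),
            hr_def, ← Real.rpow_natCast ((2:ℝ) ^ (-(2*β))) m,
            ← Real.rpow_mul (by norm_num)]
          ring_nf
        rw [h2m]; ring
      have := add_le_add ih hblk
      linarith [this]
  have hgeom : ∀ m : ℕ, (∑ k ∈ Finset.range m, r ^ k) ≤ 1 / (1 - r) := by
    intro m
    have hgs := geom_sum_eq (ne_of_lt hr1) m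
    have heq : (r ^ m - 1) / (r - 1) = (1 - r ^ m) / (1 - r) := by
      rw [← neg_div_neg_eq]; ring_nf
    rw [hgs, heq, div_le_div_iff₀ h1r h1r]
    have : 0 ≤ r ^ m := le_of_lt (pow_pos hr0 m)
    nlinarith
  have hC : ∀ m : ℕ, (∑ j ∈ Finset.Ico N (2 ^ m * N), θ j ^ 2) ≤
      c₂ * (N : ℝ) ^ (-(2 * β)) / (1 - r) := by
    intro m
    refine le_trans (key m) ?_
    rw [div_eq_mul_one_div]
    exact mul_le_mul_of_nonneg_left (hgeom m) (by positivity)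
  by_cases hsum : Summable (fun i : ℕ => θ (N + i) ^ 2)
  · have htail : (∑' i : ℕ, θ (N + i) ^ 2) ≤ c₂ * (N : ℝ) ^ (-(2 * β)) / (1 - r) := by
      refine hsum.tsum_le_of_sum_le (fun s => ?_)
      set m : ℕ := N + s.sup id + 1 with hm
      have hsub : s.image (fun i => N + i) ⊆ Finset.Ico N (2 ^ m * N) := by
        intro j hj
        simp only [Finset.mem_image] at hj
        obtain ⟨i, hi, rfl⟩ := hj
        refine Finset.mem_Ico.2 ⟨Nat.le_add_right _ _, ?_⟩
        have hi' : i ≤ s.sup id := Finset.le_sup (f := id) hi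
        have h2m : m < 2 ^ m := Nat.lt_two_pow_self
        calc N + i < m := by omega
          _ < 2 ^ m := h2m
          _ ≤ 2 ^ m * N := Nat.le_mul_of_pos_right _ (by omega)
      have himg : (∑ i ∈ s, θ (N + i) ^ 2) = ∑ j ∈ s.image (fun i => N + i), θ j ^ 2 := by
        rw [Finset.sum_image (fun a _ b _ h => by omega)]
      rw [himg]
      refine le_trans (Finset.sum_le_sum_of_subset_of_nonneg hsub
        (fun j _ _ => sq_nonneg _)) (hC m)
    have : c₁ * (1 - r) / c₂ * (c₂ * (N : ℝ) ^ (-(2 * β)) / (1 - r)) =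
        c₁ * (N : ℝ) ^ (-(2 * β)) := by
      field_simp
    calc c₁ * (1 - r) / c₂ * (∑' i : ℕ, θ (N + i) ^ 2)
        ≤ c₁ * (1 - r) / c₂ * (c₂ * (N : ℝ) ^ (-(2 * β)) / (1 - r)) :=
          mul_le_mul_of_nonneg_left htail (by positivity)
      _ = c₁ * (N : ℝ) ^ (-(2 * β)) := this
      _ ≤ _ := hblock
  · rw [tsum_eq_zero_of_not_summable hsum, mul_zero]
    exact le_trans (by positivity) hblock
end

section
/- The squared bias of the posterior mean in the direct model: if θ̂_i = n θ_{0,i}/(i^{1+2α} + n) (the noiseless posterior mean with κ_i = 1), and θ_{0,i}² ≤ M i^{-(1+2β)} with 0 < β ≤ α, then ∑_{i≥1} (θ̂_i − θ_{0,i})² ≤ C M n^{-2β/(1+2α)} for a constant C depending only on α, β. -/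
private lemma bias_aux_pow (p t : ℝ) (hp : 0 < p) (ht0 : 0 < t) (ht1 : t ≤ 1) :
    min p 1 * (1 - t) ≤ 1 - t ^ p := by
  rcases le_or_gt 1 p with h | h
  · have h1 : t ^ p ≤ t ^ (1:ℝ) := Real.rpow_le_rpow_of_exponent_ge ht0 ht1 h
    rw [Real.rpow_one] at h1
    rw [min_eq_right h]
    linarith
  · have h1 : t ^ p * (1:ℝ) ^ (1 - p) ≤ p * t + (1 - p) * 1 :=
      Real.geom_mean_le_arith_mean2_weighted hp.le (by linarith) ht0.le zero_le_one (by ring)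
    rw [Real.one_rpow, mul_one, mul_one] at h1
    rw [min_eq_left h.le]
    linarith

private lemma bias_telescope (β : ℝ) (hβ : 0 < β) (x : ℝ) (hx : 1 ≤ x) :
    x ^ (-(1 + 2 * β)) ≤ (2 / min (2 * β) 1) * (x ^ (-(2 * β)) - (x + 1) ^ (-(2 * β))) := by
  have hx0 : (0:ℝ) < x := by linarith
  have hx1 : (0:ℝ) < x + 1 := by linarith
  set c := min (2 * β) 1 with hcdef
  have hc : 0 < c := lt_min (by linarith) one_pos
  set t := x / (x + 1) with htdef
  have ht0 : 0 < t := div_pos hx0 hx1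
  have ht1 : t ≤ 1 := by rw [htdef, div_le_one hx1]; linarith
  have key : c * (1 - t) ≤ 1 - t ^ (2 * β) := bias_aux_pow (2 * β) t (by linarith) ht0 ht1
  have htp : t ^ (2 * β) = x ^ (2 * β) / (x + 1) ^ (2 * β) := by
    rw [htdef]; exact Real.div_rpow hx0.le hx1.le _
  have hxpos : (0:ℝ) < x ^ (2 * β) := Real.rpow_pos_of_pos hx0 _
  have hx1pos : (0:ℝ) < (x + 1) ^ (2 * β) := Real.rpow_pos_of_pos hx1 _
  have hP : (0:ℝ) < x ^ (-(2 * β)) := Real.rpow_pos_of_pos hx0 _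
  -- e2 : x^(-(2β)) * t^(2β) = (x+1)^(-(2β))
  have e2 : x ^ (-(2 * β)) * t ^ (2 * β) = (x + 1) ^ (-(2 * β)) := by
    rw [htp, Real.rpow_neg hx0.le, Real.rpow_neg hx1.le]
    field_simp
  -- e1 : x^(-(2β)) - (x+1)^(-(2β)) = x^(-(2β)) * (1 - t^(2β))
  have e1 : x ^ (-(2 * β)) - (x + 1) ^ (-(2 * β)) = x ^ (-(2 * β)) * (1 - t ^ (2 * β)) := by
    rw [mul_sub, mul_one, e2]
  -- e3 : x^(-(1+2β)) = x^(-(2β)) / x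
  have e3 : x ^ (-(1 + 2 * β)) = x ^ (-(2 * β)) / x := by
    have h := Real.rpow_add hx0 (-(1 + 2 * β)) 1
    rw [Real.rpow_one] at h
    rw [eq_div_iff hx0.ne', ← h]
    norm_num
  have h1t : 1 - t = 1 / (x + 1) := by
    rw [htdef]; field_simp; ring
  have h4 : c / (2 * x) ≤ 1 - t ^ (2 * β) := by
    have hA : c * (1 / (x + 1)) ≤ 1 - t ^ (2 * β) := by rw [← h1t]; exact key
    have hB : c / (2 * x) ≤ c / (x + 1) := by
      apply div_le_div_of_nonneg_left hc.le hx1; linarith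
    calc c / (2 * x) ≤ c / (x + 1) := hB
      _ = c * (1 / (x + 1)) := by ring
      _ ≤ 1 - t ^ (2 * β) := hA
  rw [e3, e1]
  calc x ^ (-(2 * β)) / x = (2 / c) * (x ^ (-(2 * β)) * (c / (2 * x))) := by
        field_simp
    _ ≤ (2 / c) * (x ^ (-(2 * β)) * (1 - t ^ (2 * β))) := by
        apply mul_le_mul_of_nonneg_left _ (by positivity)
        exact mul_le_mul_of_nonneg_left h4 hP.le

/-- Squared bias of the posterior mean in the direct model: if θ_{0,i}² ≤ M i^{-(1+2β)} with
0 < β ≤ α, then ∑_i i^{2(1+2α)} θ_{0,i}²/(i^{1+2α}+n)² ≤ C M n^{-2β/(1+2α)} for a constant C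
depending only on α, β. -/
theorem posterior_mean_bias_bound (α β : ℝ) (hβ : 0 < β) (hβα : β ≤ α) :
    ∃ C : ℝ, 0 < C ∧ ∀ (M : ℝ), 0 < M → ∀ (θ : ℕ → ℝ),
      (∀ i : ℕ, 1 ≤ i → θ i ^ 2 ≤ M * (i : ℝ) ^ (-(1 + 2 * β))) →
      ∀ n : ℕ, 1 ≤ n →
        (∑' i : ℕ, ((i : ℝ) + 1) ^ (2 * (1 + 2 * α)) * θ (i + 1) ^ 2 /
            (((i : ℝ) + 1) ^ (1 + 2 * α) + n) ^ 2) ≤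
          C * M * (n : ℝ) ^ (-(2 * β) / (1 + 2 * α)) := by
  have hα : 0 < α := lt_of_lt_of_le hβ hβα
  set A : ℝ := 1 + 2 * α with hAdef
  have hA : 0 < A := by positivity
  set c : ℝ := min (2 * β) 1 with hcdef
  have hc : 0 < c := lt_min (by linarith) one_pos
  set γ : ℝ := 2 * A - (1 + 2 * β) with hγdef
  have hγ : 0 ≤ γ := by rw [hγdef, hAdef]; linarith
  refine ⟨(2:ℝ) ^ (γ + 1) + 2 / c, by positivity, ?_⟩
  intro M hM θ hθ n hn
  have hn0 : (0:ℝ) < n := by exact_mod_cast hn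
  have hn1 : (1:ℝ) ≤ n := by exact_mod_cast hn
  set T : ℕ → ℝ := fun i => ((i : ℝ) + 1) ^ (2 * A) * θ (i + 1) ^ 2 /
      (((i : ℝ) + 1) ^ A + n) ^ 2 with hTdef
  have hx1 : ∀ i : ℕ, (1:ℝ) ≤ (i : ℝ) + 1 := by
    intro i; have : (0:ℝ) ≤ i := Nat.cast_nonneg i; linarith
  have hx0 : ∀ i : ℕ, (0:ℝ) < (i : ℝ) + 1 := fun i => lt_of_lt_of_le one_pos (hx1 i)
  have hθ' : ∀ i : ℕ, θ (i + 1) ^ 2 ≤ M * ((i : ℝ) + 1) ^ (-(1 + 2 * β)) := by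
    intro i
    have := hθ (i + 1) (Nat.le_add_left 1 i)
    push_cast at this
    convert this using 3
  have hTnonneg : ∀ i : ℕ, 0 ≤ T i := by
    intro i
    apply div_nonneg (mul_nonneg (Real.rpow_nonneg (hx0 i).le _) (sq_nonneg _))
    positivity
  -- Bound 1: T i ≤ M * (i+1)^(-(1+2β))
  have hbound1 : ∀ i : ℕ, T i ≤ M * ((i : ℝ) + 1) ^ (-(1 + 2 * β)) := by
    intro i
    set x : ℝ := (i : ℝ) + 1
    have hxp : (0:ℝ) < x ^ (2 * A) := Real.rpow_pos_of_pos (hx0 i) _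
    have hden : x ^ (2 * A) ≤ (x ^ A + n) ^ 2 := by
      have h1 : x ^ (2 * A) = (x ^ A) ^ 2 := by
        rw [← Real.rpow_natCast (x ^ A) 2, ← Real.rpow_mul (hx0 i).le]
        norm_num [mul_comm]
        rfl
      rw [h1]
      have : x ^ A ≤ x ^ A + n := by linarith
      exact pow_le_pow_left₀ (Real.rpow_pos_of_pos (hx0 i) A).le this 2
    calc T i ≤ x ^ (2 * A) * θ (i + 1) ^ 2 / x ^ (2 * A) := by
          apply div_le_div_of_nonneg_left (mul_nonneg hxp.le (sq_nonneg _)) hxp hden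
      _ = θ (i + 1) ^ 2 := by field_simp
      _ ≤ M * x ^ (-(1 + 2 * β)) := hθ' i
  -- Bound 2: T i ≤ M * (i+1)^γ / n^2
  have hbound2 : ∀ i : ℕ, T i ≤ M * ((i : ℝ) + 1) ^ γ / (n : ℝ) ^ 2 := by
    intro i
    set x : ℝ := (i : ℝ) + 1
    have hn2 : (0:ℝ) < (n : ℝ) ^ 2 := by positivity
    have hden : (n : ℝ) ^ 2 ≤ (x ^ A + n) ^ 2 := by
      have h1 : (0:ℝ) < x ^ A := Real.rpow_pos_of_pos (hx0 i) _
      have : (n:ℝ) ≤ x ^ A + n := by linarith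
      exact pow_le_pow_left₀ hn0.le this 2
    calc T i ≤ x ^ (2 * A) * θ (i + 1) ^ 2 / (n : ℝ) ^ 2 := by
          apply div_le_div_of_nonneg_left (mul_nonneg (Real.rpow_pos_of_pos (hx0 i) _).le (sq_nonneg _)) hn2 hden
      _ ≤ x ^ (2 * A) * (M * x ^ (-(1 + 2 * β))) / (n : ℝ) ^ 2 := by
          gcongr
          exact hθ' i
      _ = M * x ^ γ / (n : ℝ) ^ 2 := by
          rw [hγdef]
          rw [show x ^ (2 * A) * (M * x ^ (-(1 + 2 * β))) = M * (x ^ (2*A) * x ^ (-(1 + 2 * β))) by ring]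
          rw [← Real.rpow_add (hx0 i)]
          rw [show 2 * A + -(1 + 2 * β) = 2 * A - (1 + 2 * β) by ring]
  -- Summability
  have hsum_maj : Summable (fun i : ℕ => M * ((i : ℝ) + 1) ^ (-(1 + 2 * β))) := by
    have h1 : Summable (fun j : ℕ => (j : ℝ) ^ (-(1 + 2 * β))) :=
      Real.summable_nat_rpow.2 (by linarith)
    have h2 : Summable (fun i : ℕ => ((i + 1 : ℕ) : ℝ) ^ (-(1 + 2 * β))) :=
      (summable_nat_add_iff 1).2 h1
    have h3 : (fun i : ℕ => ((i + 1 : ℕ) : ℝ) ^ (-(1 + 2 * β)))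
        = fun i : ℕ => ((i : ℝ) + 1) ^ (-(1 + 2 * β)) := by
      funext i; push_cast; ring_nf
    exact (h3 ▸ h2).mul_left M
  have hT : Summable T := Summable.of_nonneg_of_le hTnonneg hbound1 hsum_maj
  -- cutoff
  set y : ℝ := (n : ℝ) ^ (1 / A) with hydef
  have hy1 : (1:ℝ) ≤ y := Real.one_le_rpow hn1 (by positivity)
  set N : ℕ := ⌈y⌉₊ with hNdef
  have hNy : y ≤ (N : ℝ) := Nat.le_ceil y
  have hN1 : 1 ≤ N := Nat.one_le_ceil_iff.2 (by linarith)
  have hNle : (N : ℝ) ≤ 2 * y := by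
    have := Nat.ceil_lt_add_one (by positivity : (0:ℝ) ≤ y)
    linarith
  have hyA : y ^ (-(2 * β)) = (n : ℝ) ^ (-(2 * β) / A) := by
    rw [hydef, ← Real.rpow_mul hn0.le]
    congr 1; field_simp
  -- telescoping tail bound
  set f : ℕ → ℝ := fun k => ((k : ℝ) + 1) ^ (-(2 * β)) with hfdef
  have htail_term : ∀ i : ℕ, T i ≤ M * (2 / c) * (f i - f (i + 1)) := by
    intro i
    have ht := bias_telescope β hβ ((i : ℝ) + 1) (hx1 i)
    calc T i ≤ M * ((i : ℝ) + 1) ^ (-(1 + 2 * β)) := hbound1 i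
      _ ≤ M * ((2 / c) * (((i : ℝ) + 1) ^ (-(2 * β)) - ((i : ℝ) + 1 + 1) ^ (-(2 * β)))) :=
          mul_le_mul_of_nonneg_left ht hM.le
      _ = M * (2 / c) * (f i - f (i + 1)) := by
          simp only [hfdef]; push_cast; ring
  -- finite-sum bound
  have hfin : ∀ m : ℕ, ∑ i ∈ Finset.range m, T i
      ≤ ((2:ℝ) ^ (γ + 1) + 2 / c) * M * (n : ℝ) ^ (-(2 * β) / A) := by
    intro m
    set m' : ℕ := max m N with hm'def
    have hmm : ∑ i ∈ Finset.range m, T i ≤ ∑ i ∈ Finset.range m', T i :=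
      Finset.sum_le_sum_of_subset_of_nonneg
        (Finset.range_subset_range.2 (le_max_left _ _)) (fun i _ _ => hTnonneg i)
    have hsplit : ∑ i ∈ Finset.range N, T i + ∑ i ∈ Finset.Ico N m', T i
        = ∑ i ∈ Finset.range m', T i :=
      Finset.sum_range_add_sum_Ico _ (le_max_right _ _)
    have hhead : ∑ i ∈ Finset.range N, T i ≤ (2:ℝ) ^ (γ + 1) * M * (n : ℝ) ^ (-(2 * β) / A) := by
      have h1 : ∀ i ∈ Finset.range N, T i ≤ M * (N : ℝ) ^ γ / (n : ℝ) ^ 2 := by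
        intro i hi
        refine (hbound2 i).trans ?_
        have hiN : (i : ℝ) + 1 ≤ (N : ℝ) := by
          have : i + 1 ≤ N := Finset.mem_range.1 hi
          exact_mod_cast this
        gcongr
      have h2 : ∑ i ∈ Finset.range N, T i ≤ (N : ℝ) * (M * (N : ℝ) ^ γ / (n : ℝ) ^ 2) := by
        calc ∑ i ∈ Finset.range N, T i
            ≤ ∑ _i ∈ Finset.range N, (M * (N : ℝ) ^ γ / (n : ℝ) ^ 2) := Finset.sum_le_sum h1
          _ = (N : ℝ) * (M * (N : ℝ) ^ γ / (n : ℝ) ^ 2) := by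
              rw [Finset.sum_const, Finset.card_range, nsmul_eq_mul]
      refine h2.trans ?_
      have hN0 : (0:ℝ) < (N : ℝ) := by exact_mod_cast hN1
      have hNpow : (N : ℝ) * (N : ℝ) ^ γ = (N : ℝ) ^ (γ + 1) := by
        rw [Real.rpow_add_one hN0.ne']; ring
      have hNbound : (N : ℝ) ^ (γ + 1) ≤ (2:ℝ) ^ (γ + 1) * y ^ (γ + 1) := by
        rw [← Real.mul_rpow (by norm_num) (by positivity)]
        exact Real.rpow_le_rpow hN0.le hNle (by linarith)
      have hy2 : y ^ (γ + 1) / (n : ℝ) ^ 2 = (n : ℝ) ^ (-(2 * β) / A) := by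
        rw [hydef, ← Real.rpow_mul hn0.le, ← Real.rpow_natCast (n:ℝ) 2, ← Real.rpow_sub hn0]
        congr 1
        push_cast
        rw [hγdef]
        field_simp
        ring
      calc (N : ℝ) * (M * (N : ℝ) ^ γ / (n : ℝ) ^ 2)
          = M * ((N : ℝ) * (N : ℝ) ^ γ) / (n : ℝ) ^ 2 := by ring
        _ = M * (N : ℝ) ^ (γ + 1) / (n : ℝ) ^ 2 := by rw [hNpow]
        _ ≤ M * ((2:ℝ) ^ (γ + 1) * y ^ (γ + 1)) / (n : ℝ) ^ 2 := by gcongr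
        _ = (2:ℝ) ^ (γ + 1) * M * (y ^ (γ + 1) / (n : ℝ) ^ 2) := by ring
        _ = (2:ℝ) ^ (γ + 1) * M * (n : ℝ) ^ (-(2 * β) / A) := by rw [hy2]
    have htail : ∑ i ∈ Finset.Ico N m', T i ≤ (2 / c) * M * (n : ℝ) ^ (-(2 * β) / A) := by
      have h1 : ∑ i ∈ Finset.Ico N m', T i
          ≤ ∑ i ∈ Finset.Ico N m', (M * (2 / c) * (f i - f (i + 1))) :=
        Finset.sum_le_sum (fun i _ => htail_term i)
      have h2 : ∑ i ∈ Finset.Ico N m', (f i - f (i + 1)) = f N - f m' := by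
        rw [Finset.sum_Ico_eq_sum_range]
        have h3 := Finset.sum_range_sub' (fun k => f (N + k)) (m' - N)
        simp only [Nat.add_zero] at h3
        rw [Nat.add_sub_cancel' (le_max_right m N)] at h3
        exact h3
      have hfN : f N ≤ (n : ℝ) ^ (-(2 * β) / A) := by
        have hyN1 : y ≤ (N : ℝ) + 1 := by linarith
        have h := Real.rpow_le_rpow_of_nonpos (by positivity : (0:ℝ) < y) hyN1
          (by linarith : -(2 * β) ≤ 0)
        exact h.trans_eq hyA
      have hfm' : 0 ≤ f m' := Real.rpow_nonneg (by positivity) _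
      calc ∑ i ∈ Finset.Ico N m', T i
          ≤ ∑ i ∈ Finset.Ico N m', (M * (2 / c) * (f i - f (i + 1))) := h1
        _ = M * (2 / c) * (f N - f m') := by rw [← Finset.mul_sum, h2]
        _ ≤ M * (2 / c) * f N := by
            apply mul_le_mul_of_nonneg_left _ (by positivity); linarith
        _ = (2 / c) * M * f N := by ring
        _ ≤ (2 / c) * M * (n : ℝ) ^ (-(2 * β) / A) := by
            apply mul_le_mul_of_nonneg_left hfN (by positivity)
    calc ∑ i ∈ Finset.range m, T i ≤ ∑ i ∈ Finset.range m', T i := hmm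
      _ = ∑ i ∈ Finset.range N, T i + ∑ i ∈ Finset.Ico N m', T i := hsplit.symm
      _ ≤ (2:ℝ) ^ (γ + 1) * M * (n : ℝ) ^ (-(2 * β) / A)
          + (2 / c) * M * (n : ℝ) ^ (-(2 * β) / A) := add_le_add hhead htail
      _ = ((2:ℝ) ^ (γ + 1) + 2 / c) * M * (n : ℝ) ^ (-(2 * β) / A) := by ring
  refine hT.tsum_le_of_sum_le (fun s => ?_)
  obtain ⟨m, hm⟩ := s.exists_nat_subset_range
  exact (Finset.sum_le_sum_of_subset_of_nonneg hm (fun i _ _ => hTnonneg i)).trans (hfin m)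
end

section
/- When α = β, the sum of squared bias and posterior variance in the direct white noise model is of order n^{-2β/(1+2β)}: with θ_{0,i}² ≤ M i^{-(1+2β)}, one has ∑_i i^{2(1+2β)}θ_{0,i}²/(i^{1+2β}+n)² + ∑_i 1/(i^{1+2β}+n) ≤ C(M+1) n^{-2β/(1+2β)}. -/
open Finset

/-- Key elementary inequality: `(1+qt)(1-t)^q ≤ 1`. -/
lemma aux_one (q t : ℝ) (hq : 0 < q) (ht0 : 0 < t) (ht1 : t < 1) :
    (1 + q * t) * (1 - t) ^ q ≤ 1 := by
  have h1 : (1 - t : ℝ) > 0 := by linarith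
  have hlog : Real.log (1 - t) ≤ -t := by
    have := Real.log_le_sub_one_of_pos h1
    linarith
  have h2 : (1 - t) ^ q = Real.exp (q * Real.log (1 - t)) := by
    rw [Real.rpow_def_of_pos h1, mul_comm]
  have h3 : 1 + q * t ≤ Real.exp (q * t) := by linarith [Real.add_one_le_exp (q * t)]
  calc (1 + q * t) * (1 - t) ^ q ≤ Real.exp (q * t) * Real.exp (q * Real.log (1 - t)) := by
        rw [h2]; exact mul_le_mul_of_nonneg_right h3 (Real.exp_pos _).le
    _ = Real.exp (q * t + q * Real.log (1 - t)) := (Real.exp_add _ _).symm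
    _ ≤ Real.exp 0 := by
        apply Real.exp_le_exp.2
        nlinarith
    _ = 1 := Real.exp_zero

/-- `q (x+1)^{-(q+1)} ≤ x^{-q} - (x+1)^{-q}` for `x ≥ 1`. -/
lemma aux_tel (q x : ℝ) (hq : 0 < q) (hx : 1 ≤ x) :
    q * (x + 1) ^ (-(q + 1)) ≤ x ^ (-q) - (x + 1) ^ (-q) := by
  have hx0 : (0:ℝ) < x := by linarith
  have hx1 : (0:ℝ) < x + 1 := by linarith
  set t : ℝ := 1 / (x + 1) with ht
  have ht0 : 0 < t := by positivity
  have ht1 : t < 1 := by rw [ht, div_lt_one hx1]; linarith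
  have key := aux_one q t hq ht0 ht1
  have hxt : 1 - t = x / (x + 1) := by rw [ht]; field_simp; ring
  have h2 : (1 - t) ^ q = x ^ q / (x + 1) ^ q := by
    rw [hxt, Real.div_rpow hx0.le hx1.le]
  rw [h2] at key
  have hxq : (0:ℝ) < x ^ q := Real.rpow_pos_of_pos hx0 q
  have hx1q : (0:ℝ) < (x + 1) ^ q := Real.rpow_pos_of_pos hx1 q
  have key2 : (1 + q * t) * x ^ q ≤ (x + 1) ^ q := by
    rw [mul_div_assoc', div_le_one hx1q] at key
    exact key
  rw [ht] at key2
  have key3 : (x + 1) * x ^ q + q * x ^ q ≤ (x + 1) ^ q * (x + 1) := by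
    have h := mul_le_mul_of_nonneg_right key2 hx1.le
    have he : (1 + q * (1 / (x + 1))) * x ^ q * (x + 1)
        = (x + 1) * x ^ q + q * x ^ q := by field_simp
    linarith [he ▸ h]
  have key4 : q * x ^ q ≤ ((x + 1) ^ q - x ^ q) * (x + 1) := by nlinarith [key3]
  have e1 : x ^ (-q) = (x ^ q)⁻¹ := Real.rpow_neg hx0.le q
  have e2 : (x + 1) ^ (-q) = ((x + 1) ^ q)⁻¹ := Real.rpow_neg hx1.le q
  have e3 : (x + 1) ^ (-(q + 1)) = ((x + 1) ^ q * (x + 1))⁻¹ := by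
    rw [Real.rpow_neg hx1.le, Real.rpow_add hx1, Real.rpow_one]
  rw [e1, e2, e3, inv_eq_one_div, inv_eq_one_div, inv_eq_one_div, mul_one_div,
    div_sub_div _ _ hxq.ne' hx1q.ne', div_le_div_iff₀ (by positivity) (by positivity)]
  nlinarith [mul_le_mul_of_nonneg_right key4 hx1q.le]

/-- Partial sums of the tail `∑_{j<m} (N+j+1)^{-(q+1)}` are bounded by `N^{-q}/q`. -/
lemma tail_partial (q : ℝ) (hq : 0 < q) (N : ℕ) (hN : 1 ≤ N) (m : ℕ) :
    ∑ j ∈ Finset.range m, ((N : ℝ) + j + 1) ^ (-(q + 1)) ≤ (N : ℝ) ^ (-q) / q := by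
  set g : ℕ → ℝ := fun k => ((N : ℝ) + k) ^ (-q) with hg
  have key : ∀ j ∈ Finset.range m,
      ((N : ℝ) + j + 1) ^ (-(q + 1)) ≤ (1/q) * (g j - g (j + 1)) := by
    intro j _
    have hx : (1:ℝ) ≤ (N : ℝ) + j := by
      have h1 : (1:ℝ) ≤ (N:ℝ) := by exact_mod_cast hN
      have h2 : (0:ℝ) ≤ (j:ℝ) := Nat.cast_nonneg j
      linarith
    have h := aux_tel q ((N:ℝ) + j) hq hx
    have e : g (j + 1) = ((N:ℝ) + j + 1) ^ (-q) := by
      simp only [hg]; push_cast; ring_nf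
    rw [e]; simp only [hg]
    calc ((N:ℝ) + j + 1) ^ (-(q+1)) = (1/q) * (q * (((N:ℝ) + j) + 1) ^ (-(q+1))) := by
          field_simp
      _ ≤ (1/q) * ((((N:ℝ) + j) ^ (-q) - (((N:ℝ) + j) + 1) ^ (-q))) :=
          mul_le_mul_of_nonneg_left h (by positivity)
  calc ∑ j ∈ Finset.range m, ((N : ℝ) + j + 1) ^ (-(q + 1))
      ≤ ∑ j ∈ Finset.range m, (1/q) * (g j - g (j + 1)) := Finset.sum_le_sum key
    _ = (1/q) * (g 0 - g m) := by
        rw [← Finset.mul_sum, Finset.sum_range_sub' g m]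
    _ ≤ (1/q) * ((N:ℝ) ^ (-q)) := by
        apply mul_le_mul_of_nonneg_left _ (by positivity)
        have hNm : (0:ℝ) < (N:ℝ) + m := by
          have h1 : (1:ℝ) ≤ (N:ℝ) := by exact_mod_cast hN
          have h2 : (0:ℝ) ≤ (m:ℝ) := Nat.cast_nonneg m
          linarith
        have hpos : (0:ℝ) ≤ ((N:ℝ) + m) ^ (-q) := (Real.rpow_pos_of_pos hNm _).le
        have e0 : g 0 = (N:ℝ) ^ (-q) := by simp [hg]
        rw [e0]
        have : g m = ((N:ℝ) + m) ^ (-q) := rfl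
        rw [this]
        linarith
    _ = (N : ℝ) ^ (-q) / q := by ring

/-- The core sum bound: `∑ 1/((i+1)^p + n) ≤ (2 + 1/(2β)) n^{-2β/p}` with `p = 1+2β`. -/
lemma core_sum (β : ℝ) (hβ : 0 < β) (n : ℕ) (hn : 1 ≤ n) :
    ∑' i : ℕ, 1 / (((i : ℝ) + 1) ^ (1 + 2 * β) + n)
      ≤ (2 + 1 / (2 * β)) * (n : ℝ) ^ (-(2 * β) / (1 + 2 * β)) := by
  set p : ℝ := 1 + 2 * β with hp
  set q : ℝ := 2 * β with hq
  have hq0 : 0 < q := by positivity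
  have hp1 : 1 < p := by rw [hp]; linarith
  have hp0 : 0 < p := by linarith
  have npos : (0:ℝ) < n := by exact_mod_cast hn
  have hn1 : (1:ℝ) ≤ n := by exact_mod_cast hn
  set f : ℕ → ℝ := fun i => 1 / (((i : ℝ) + 1) ^ p + n) with hf
  have hbase : ∀ i : ℕ, (0:ℝ) < ((i : ℝ) + 1) ^ p := fun i =>
    Real.rpow_pos_of_pos (by positivity) p
  have hfpos : ∀ i, 0 ≤ f i := fun i => by
    have := hbase i; simp only [hf]; positivity
  have hfle : ∀ i, f i ≤ ((i : ℝ) + 1) ^ (-p) := by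
    intro i
    rw [Real.rpow_neg (by positivity), inv_eq_one_div]
    exact one_div_le_one_div_of_le (hbase i) (by linarith [hbase i])
  have hg : Summable (fun i : ℕ => ((i : ℝ) + 1) ^ (-p)) := by
    have h := (Real.summable_nat_rpow (p := -p)).2 (by linarith)
    have h2 := (summable_nat_add_iff 1).2 h
    exact h2.congr (fun i => by push_cast; norm_num)
  have hfsum : Summable f := Summable.of_nonneg_of_le hfpos hfle hg
  -- the cut point
  set N : ℕ := ⌈(n : ℝ) ^ (1/p)⌉₊ with hN
  have hr1 : (1:ℝ) ≤ (n:ℝ) ^ (1/p) := by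
    calc (1:ℝ) = (1:ℝ) ^ (1/p) := (Real.one_rpow _).symm
      _ ≤ (n:ℝ) ^ (1/p) := Real.rpow_le_rpow zero_le_one hn1 (by positivity)
  have hN1 : 1 ≤ N := Nat.one_le_ceil_iff.2 (by linarith)
  have hNge : (n:ℝ) ^ (1/p) ≤ (N:ℝ) := Nat.le_ceil _
  have hNle : (N:ℝ) ≤ (n:ℝ) ^ (1/p) + 1 := (Nat.ceil_lt_add_one (by positivity)).le
  -- the target rate
  have hrate : (n:ℝ) ^ (-q/p) = (n:ℝ) ^ (1/p) * (n:ℝ) ^ (-1:ℝ) := by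
    rw [← Real.rpow_add npos]
    congr 1
    field_simp
    ring
  have hratepos : (0:ℝ) < (n:ℝ) ^ (-q/p) := Real.rpow_pos_of_pos npos _
  -- head bound
  have head : ∑ i ∈ Finset.range N, f i ≤ 2 * (n:ℝ) ^ (-q/p) := by
    have h1 : ∑ i ∈ Finset.range N, f i ≤ (Finset.range N).card • (1/(n:ℝ)) := by
      apply Finset.sum_le_card_nsmul
      intro i _
      simp only [hf]
      exact one_div_le_one_div_of_le npos (by linarith [hbase i])
    have h2 : (N:ℝ) * (1/(n:ℝ)) ≤ 2 * (n:ℝ) ^ (-q/p) := by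
      rw [hrate, Real.rpow_neg_one]
      calc (N:ℝ) * (1/(n:ℝ)) ≤ (2 * (n:ℝ)^(1/p)) * (1/(n:ℝ)) := by
            apply mul_le_mul_of_nonneg_right _ (by positivity)
            linarith
        _ = 2 * ((n:ℝ)^(1/p) * ((n:ℝ))⁻¹) := by rw [one_div]; ring
    rw [Finset.card_range] at h1
    calc ∑ i ∈ Finset.range N, f i ≤ N • (1/(n:ℝ)) := h1
      _ = (N:ℝ) * (1/(n:ℝ)) := by rw [nsmul_eq_mul]
      _ ≤ 2 * (n:ℝ) ^ (-q/p) := h2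
  -- tail bound
  have tail : ∑' i : ℕ, f (i + N) ≤ (1/q) * (n:ℝ) ^ (-q/p) := by
    apply Real.tsum_le_of_sum_range_le (fun i => hfpos _)
    intro m
    have step : ∀ j ∈ Finset.range m, f (j + N) ≤ ((N:ℝ) + j + 1) ^ (-(q+1)) := by
      intro j _
      have e : ((j + N : ℕ) : ℝ) + 1 = (N:ℝ) + j + 1 := by push_cast; ring
      have hb : (0:ℝ) < ((N:ℝ) + j + 1) := by
        have : (0:ℝ) ≤ (N:ℝ) := Nat.cast_nonneg N
        have : (0:ℝ) ≤ (j:ℝ) := Nat.cast_nonneg j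
        positivity
      have hpq : -(q+1) = -p := by rw [hp, hq]; ring
      rw [hpq]
      calc f (j + N) ≤ (((j + N : ℕ) : ℝ) + 1) ^ (-p) := hfle _
        _ = ((N:ℝ) + j + 1) ^ (-p) := by rw [e]
    calc ∑ j ∈ Finset.range m, f (j + N)
        ≤ ∑ j ∈ Finset.range m, ((N:ℝ) + j + 1) ^ (-(q+1)) := Finset.sum_le_sum step
      _ ≤ (N:ℝ) ^ (-q) / q := tail_partial q hq0 N hN1 m
      _ ≤ (1/q) * (n:ℝ) ^ (-q/p) := by
          rw [div_eq_mul_one_div, mul_comm]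
          apply mul_le_mul_of_nonneg_left _ (by positivity)
          have h1 : ((n:ℝ) ^ (1/p)) ^ (-q) = (n:ℝ) ^ (-q/p) := by
            rw [← Real.rpow_mul npos.le]
            congr 1
            field_simp
          rw [← h1]
          exact Real.rpow_le_rpow_of_nonpos (by linarith) hNge (by linarith)
  -- combine
  have split := hfsum.sum_add_tsum_nat_add N
  calc ∑' i : ℕ, f i = ∑ i ∈ Finset.range N, f i + ∑' i : ℕ, f (i + N) := split.symm
    _ ≤ 2 * (n:ℝ) ^ (-q/p) + (1/q) * (n:ℝ) ^ (-q/p) := add_le_add head tail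
    _ = (2 + 1/q) * (n:ℝ) ^ (-q/p) := by ring

/-- With matching regularities α = β, the sum of squared bias and posterior variance in the
direct white noise model is of order n^{-2β/(1+2β)}. -/
theorem bias_variance_minimax_rate (β : ℝ) (hβ : 0 < β) :
    ∃ C : ℝ, 0 < C ∧ ∀ (M : ℝ), 0 < M → ∀ (θ : ℕ → ℝ),
      (∀ i : ℕ, 1 ≤ i → θ i ^ 2 ≤ M * (i : ℝ) ^ (-(1 + 2 * β))) →
      ∀ n : ℕ, 1 ≤ n →
        (∑' i : ℕ, ((i : ℝ) + 1) ^ (2 * (1 + 2 * β)) * θ (i + 1) ^ 2 /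
              (((i : ℝ) + 1) ^ (1 + 2 * β) + n) ^ 2) +
            (∑' i : ℕ, 1 / (((i : ℝ) + 1) ^ (1 + 2 * β) + n)) ≤
          C * (M + 1) * (n : ℝ) ^ (-(2 * β) / (1 + 2 * β)) := by
  refine ⟨2 + 1 / (2 * β), by positivity, ?_⟩
  intro M hM θ hθ n hn
  set p : ℝ := 1 + 2 * β with hp
  have hp0 : (0:ℝ) < p := by rw [hp]; linarith
  have npos : (0:ℝ) < n := by exact_mod_cast hn
  set f : ℕ → ℝ := fun i => 1 / (((i : ℝ) + 1) ^ p + n) with hf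
  have hbase : ∀ i : ℕ, (0:ℝ) < ((i : ℝ) + 1) ^ p := fun i =>
    Real.rpow_pos_of_pos (by positivity) p
  have hfpos : ∀ i, 0 ≤ f i := fun i => by
    have := hbase i; simp only [hf]; positivity
  have hfle : ∀ i, f i ≤ ((i : ℝ) + 1) ^ (-p) := by
    intro i
    rw [Real.rpow_neg (by positivity), inv_eq_one_div]
    exact one_div_le_one_div_of_le (hbase i) (by linarith [hbase i])
  have hg : Summable (fun i : ℕ => ((i : ℝ) + 1) ^ (-p)) := by
    have h := (Real.summable_nat_rpow (p := -p)).2 (by rw [hp]; linarith)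
    have h2 := (summable_nat_add_iff 1).2 h
    exact h2.congr (fun i => by push_cast; norm_num)
  have hfsum : Summable f := Summable.of_nonneg_of_le hfpos hfle hg
  -- bias termwise bound
  set b : ℕ → ℝ := fun i => ((i : ℝ) + 1) ^ (2 * p) * θ (i + 1) ^ 2 /
      (((i : ℝ) + 1) ^ p + n) ^ 2 with hb
  have hble : ∀ i, b i ≤ M * f i := by
    intro i
    set x : ℝ := (i : ℝ) + 1 with hx
    have hx0 : (0:ℝ) < x := by positivity
    set a : ℝ := x ^ p with ha
    have ha0 : (0:ℝ) < a := hbase i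
    set D : ℝ := a + n with hD
    have hD0 : (0:ℝ) < D := by positivity
    have hθi : θ (i + 1) ^ 2 ≤ M * x ^ (-p) := by
      have h := hθ (i + 1) (by omega)
      have e : ((i + 1 : ℕ) : ℝ) = x := by push_cast; ring
      rwa [e] at h
    have hx2p : x ^ (2 * p) = a ^ 2 := by
      rw [ha, two_mul, Real.rpow_add hx0, sq]
    have hxnp : x ^ (-p) = a⁻¹ := by rw [ha, Real.rpow_neg hx0.le]
    have h1 : x ^ (2 * p) * θ (i + 1) ^ 2 ≤ M * a := by
      calc x ^ (2 * p) * θ (i + 1) ^ 2 ≤ x ^ (2 * p) * (M * x ^ (-p)) :=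
            mul_le_mul_of_nonneg_left hθi (by positivity)
        _ = a ^ 2 * (M * a⁻¹) := by rw [hx2p, hxnp]
        _ = M * a := by field_simp
    have h2 : b i ≤ M * a / D ^ 2 := by
      have e : b i = x ^ (2 * p) * θ (i + 1) ^ 2 / D ^ 2 := rfl
      rw [e]
      exact (div_le_div_iff_of_pos_right (by positivity)).2 h1
    have h3 : M * a / D ^ 2 ≤ M / D := by
      calc M * a / D ^ 2 ≤ M * D / D ^ 2 := by
            apply (div_le_div_iff_of_pos_right (by positivity)).2
            apply mul_le_mul_of_nonneg_left _ hM.le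
            rw [hD]; linarith
        _ = M / D := by rw [sq, mul_div_mul_right _ _ hD0.ne']
    have h4 : M * f i = M / D := by
      simp only [hf, ← hD]
      rw [mul_one_div]
    rw [h4]
    exact h2.trans h3
  -- summability and tsum comparison for the bias
  have hbpos : ∀ i, 0 ≤ b i := by
    intro i
    have := hbase i
    simp only [hb]
    positivity
  have hbsum : Summable b := Summable.of_nonneg_of_le hbpos hble ((hfsum.mul_left M))
  have hbias : ∑' i, b i ≤ M * ∑' i, f i := by
    calc ∑' i, b i ≤ ∑' i, M * f i := Summable.tsum_le_tsum hble hbsum (hfsum.mul_left M)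
      _ = M * ∑' i, f i := tsum_mul_left
  have hcore := core_sum β hβ n hn
  have hSpos : 0 ≤ ∑' i, f i := tsum_nonneg hfpos
  have hratepos : (0:ℝ) ≤ (n:ℝ) ^ (-(2*β) / (1+2*β)) := (Real.rpow_pos_of_pos npos _).le
  calc (∑' i, b i) + ∑' i, f i ≤ M * ∑' i, f i + ∑' i, f i := add_le_add hbias le_rfl
    _ = (M + 1) * ∑' i, f i := by ring
    _ ≤ (M + 1) * ((2 + 1 / (2 * β)) * (n : ℝ) ^ (-(2 * β) / (1 + 2 * β))) :=
        mul_le_mul_of_nonneg_left hcore (by linarith)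
    _ = (2 + 1 / (2 * β)) * (M + 1) * (n : ℝ) ^ (-(2 * β) / (1 + 2 * β)) := by ring
end
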